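/- arXiv:1901.05672 — 2 statements merged into one kernel-verified Lean document; each statement's English description precedes it below -/
import Mathlib

section
/- Fix p, n, d, N, the exercise indices σ_1 < ⋯ < σ_{N-1} ≤ n, and a parameter ℓ = (ℓ_1,…,ℓ_{N-1}) with ℓ_i ∈ ℝ^{A_{p,n}^{⊗d,σ_i}}. For z = (z_1,…,z_N) ∈ ℝ^N and g = (g_1,…,g_n) ∈ (ℝ^d)^n define the vector field F by F_N(ℓ,z,g) = z_N and F_k(ℓ,z,g) = z_k 1{z_k ≥ C_{p,n|σ_k}(ℓ_k; g)} + F_{k+1}(ℓ,z,g) 1{z_k < C_{p,n|σ_k}(ℓ_k; g)} for 1 ≤ k ≤ N−1. Then for every k = 1,…,N−1 and all parameters a, b, |F_k(a,z,g) − F_k(b,z,g)| ≤ (Σ_{i=k}^N |z_i|) · (Σ_{i=k}^{N-1} 1{ |z_i − C_{p,n|σ_i}(b_i; g)| ≤ |a_i − b_i| · ‖C_{p,n|σ_i}‖(g) }), where ‖C_{p,n|σ_i}‖(g) = sup_{|λ| = 1} |C_{p,n|σ_i}(λ; g)|. -/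
open MeasureTheory ProbabilityTheory Polynomial

noncomputable section

/-- Evaluation of the `m`-th probabilists' Hermite polynomial. -/
def hermiteFun (m : ℕ) (x : ℝ) : ℝ := Polynomial.aeval x (Polynomial.hermite m)

/-- Multivariate Hermite polynomial `H_α^{⊗d}(x₁,…,xₙ) = ∏_j ∏_i H_{α_i^j}(x_i^j)`. -/
def hermiteProd {n d : ℕ} (α : Fin n → Fin d → ℕ) (x : Fin n → Fin d → ℝ) : ℝ :=
  ∏ j : Fin d, ∏ i : Fin n, hermiteFun (α i j) (x i j)

/-- `α! = ∏_j ∏_i (α_i^j)!`. -/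
def mfact {n d : ℕ} (α : Fin n → Fin d → ℕ) : ℕ :=
  ∏ j : Fin d, ∏ i : Fin n, Nat.factorial (α i j)

/-- `|α|₁ = Σ_j Σ_i α_i^j`. -/
def mdeg {n d : ℕ} (α : Fin n → Fin d → ℕ) : ℕ :=
  ∑ j : Fin d, ∑ i : Fin n, α i j

/-- The index set `A_{p,n}^{⊗d,k}` of multi-indices of total degree at most `p`
vanishing after index `k` (0-based: `α_i^j = 0` whenever `k ≤ i`). -/
def idxSet (n d p k : ℕ) : Finset (Fin n → Fin d → ℕ) :=
  ((Finset.univ : Finset (Fin n → Fin d → Fin (p + 1))).image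
      (fun α => fun i j => ((α i j : ℕ)))).filter
    (fun α => mdeg α ≤ p ∧ ∀ i : Fin n, ∀ j : Fin d, k ≤ (i : ℕ) → α i j = 0)

/-- `C_{p,n|σ}(λ; g) = Σ_{α ∈ A_{p,n}^{⊗d,σ}} λ_α H_α^{⊗d}(g)`. -/
def chaosEval (n d p σ : ℕ) (l : (Fin n → Fin d → ℕ) → ℝ) (g : Fin n → Fin d → ℝ) : ℝ :=
  ∑ α ∈ idxSet n d p σ, l α * hermiteProd α g

/-- Euclidean distance of two coefficient vectors on `ℝ^{A}`,
`|a - b| = √(Σ_{α ∈ A} (a_α - b_α)²)`. -/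
def coeffDist {n d : ℕ} (A : Finset (Fin n → Fin d → ℕ))
    (a b : (Fin n → Fin d → ℕ) → ℝ) : ℝ :=
  Real.sqrt (∑ α ∈ A, (a α - b α) ^ 2)

/-- `‖C_{p,n|σ}‖(g) = sup_{|λ| = 1} |C_{p,n|σ}(λ; g)|`, the sup running over coefficient
vectors on `ℝ^{A_{p,n}^{⊗d,σ}}` of unit Euclidean norm. -/
def chaosOpNorm (n d p σ : ℕ) (g : Fin n → Fin d → ℝ) : ℝ :=
  ⨆ l : {l : (Fin n → Fin d → ℕ) → ℝ // coeffDist (idxSet n d p σ) l 0 = 1},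
    |chaosEval n d p σ l.1 g|

/-- The policy-iteration vector field, defined downward from maturity:
`polF n d p N σ ℓ z g m = F_{N-m}(ℓ, z, g)` where `F_N(ℓ,z,g) = z_N` and
`F_k(ℓ,z,g) = z_k 1{z_k ≥ C_{p,n|σ_k}(ℓ_k; g)} + F_{k+1}(ℓ,z,g) 1{z_k < C_{p,n|σ_k}(ℓ_k; g)}`. -/
def polF (n d p N : ℕ) (σ : ℕ → ℕ) (l : ℕ → (Fin n → Fin d → ℕ) → ℝ)
    (z : ℕ → ℝ) (g : Fin n → Fin d → ℝ) : ℕ → ℝ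
  | 0 => z N
  | (m + 1) =>
    if chaosEval n d p (σ (N - (m + 1))) (l (N - (m + 1))) g ≤ z (N - (m + 1)) then
      z (N - (m + 1))
    else polF n d p N σ l z g m

/-- `polF` always returns one of the `z i`, so it is bounded by the sum of absolute values. -/
lemma polF_abs_le (n d p N : ℕ) (σ : ℕ → ℕ) (l : ℕ → (Fin n → Fin d → ℕ) → ℝ)
    (z : ℕ → ℝ) (g : Fin n → Fin d → ℝ) :
    ∀ m, |polF n d p N σ l z g m| ≤ ∑ i ∈ Finset.Icc (N - m) N, |z i| := by
  intro m
  induction m with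
  | zero => simp [polF]
  | succ m ih =>
    rw [polF]
    split_ifs
    · exact Finset.single_le_sum (fun i _ => abs_nonneg (z i))
        (Finset.mem_Icc.mpr ⟨le_rfl, Nat.sub_le _ _⟩)
    · exact ih.trans (Finset.sum_le_sum_of_subset_of_nonneg
        (Finset.Icc_subset_Icc_left (Nat.sub_le_sub_left (Nat.le_succ m) N))
        (fun i _ _ => abs_nonneg _))

lemma zero_mem_idxSet (n d p σ : ℕ) : (fun (_ : Fin n) (_ : Fin d) => (0 : ℕ)) ∈ idxSet n d p σ := by
  refine Finset.mem_filter.mpr ⟨Finset.mem_image.mpr ⟨fun _ _ => (0 : Fin (p + 1)), Finset.mem_univ _, ?_⟩, ?_, ?_⟩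
  · simp
  · simp [mdeg]
  · intro i j _; rfl

lemma chaosOpNorm_bddAbove (n d p σ : ℕ) (g : Fin n → Fin d → ℝ) :
    BddAbove (Set.range fun (l : {l : (Fin n → Fin d → ℕ) → ℝ //
      coeffDist (idxSet n d p σ) l 0 = 1}) => |chaosEval n d p σ l.1 g|) := by
  refine ⟨Real.sqrt (∑ α ∈ idxSet n d p σ, (hermiteProd α g) ^ 2), ?_⟩
  rintro x ⟨⟨l, hl⟩, rfl⟩
  have hl1 : ∑ α ∈ idxSet n d p σ, (l α) ^ 2 = 1 := by
    have := hl
    simp only [coeffDist, Pi.zero_apply, sub_zero] at this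
    exact Real.sqrt_eq_one.mp this
  simp only [chaosEval]
  calc |∑ α ∈ idxSet n d p σ, l α * hermiteProd α g|
      = Real.sqrt ((∑ α ∈ idxSet n d p σ, l α * hermiteProd α g) ^ 2) :=
        (Real.sqrt_sq_eq_abs _).symm
    _ ≤ Real.sqrt (∑ α ∈ idxSet n d p σ, (hermiteProd α g) ^ 2) := by
        apply Real.sqrt_le_sqrt
        calc (∑ α ∈ idxSet n d p σ, l α * hermiteProd α g) ^ 2
            ≤ (∑ α ∈ idxSet n d p σ, (l α) ^ 2) * ∑ α ∈ idxSet n d p σ, (hermiteProd α g) ^ 2 :=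
              Finset.sum_mul_sq_le_sq_mul_sq _ _ _
          _ = ∑ α ∈ idxSet n d p σ, (hermiteProd α g) ^ 2 := by rw [hl1, one_mul]

/-- `|C(a;g) - C(b;g)| ≤ |a - b| ⬝ ‖C‖(g)`. -/
lemma chaosEval_sub_le (n d p σ : ℕ) (a b : (Fin n → Fin d → ℕ) → ℝ) (g : Fin n → Fin d → ℝ) :
    |chaosEval n d p σ a g - chaosEval n d p σ b g| ≤
      coeffDist (idxSet n d p σ) a b * chaosOpNorm n d p σ g := by
  set A := idxSet n d p σ with hA
  set r := coeffDist A a b with hr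
  have hr0 : 0 ≤ r := Real.sqrt_nonneg _
  have hsub : chaosEval n d p σ a g - chaosEval n d p σ b g =
      ∑ α ∈ A, (a α - b α) * hermiteProd α g := by
    simp [chaosEval, sub_mul, Finset.sum_sub_distrib]; rfl
  rcases eq_or_lt_of_le hr0 with hrz | hrpos
  · -- r = 0 : all coefficients agree on A
    have hsq : ∑ α ∈ A, (a α - b α) ^ 2 = 0 := by
      have h := hrz.symm
      rw [hr, coeffDist] at h
      exact (Real.sqrt_eq_zero (Finset.sum_nonneg fun α _ => sq_nonneg (a α - b α))).mp h
    have hzero : ∀ α ∈ A, a α - b α = 0 := by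
      intro α hα
      have := (Finset.sum_eq_zero_iff_of_nonneg (fun β _ => sq_nonneg (a β - b β))).mp hsq α hα
      exact pow_eq_zero_iff (n := 2) (by norm_num) |>.mp this
    rw [hsub, Finset.sum_eq_zero (fun α hα => by rw [hzero α hα, zero_mul]), ← hrz]
    simp
  · -- r > 0 : rescale to a unit vector
    set u : (Fin n → Fin d → ℕ) → ℝ := fun α => (a α - b α) / r with hu
    have hunit : coeffDist A u 0 = 1 := by
      simp only [coeffDist, hu, Pi.zero_apply, sub_zero, div_pow, ← Finset.sum_div]
      rw [Real.sqrt_div' _ (sq_nonneg r), Real.sqrt_sq hr0]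
      · rw [hr, coeffDist] at *
        rw [div_eq_one_iff_eq (ne_of_gt hrpos)]
    have hval : chaosEval n d p σ u g =
        (chaosEval n d p σ a g - chaosEval n d p σ b g) / r := by
      rw [hsub, chaosEval, Finset.sum_div]
      exact Finset.sum_congr rfl (fun α _ => by rw [hu]; ring)
    have hle : |chaosEval n d p σ u g| ≤ chaosOpNorm n d p σ g :=
      le_ciSup (chaosOpNorm_bddAbove n d p σ g) ⟨u, hunit⟩
    rw [hval, abs_div, abs_of_pos hrpos, div_le_iff₀ hrpos] at hle
    linarith [hle]

lemma polF_lipschitz_aux (n d p N : ℕ) (σ : ℕ → ℕ)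
    (a b : ℕ → (Fin n → Fin d → ℕ) → ℝ) (z : ℕ → ℝ) (g : Fin n → Fin d → ℝ) :
    ∀ m k, N - k = m → 1 ≤ k → k ≤ N - 1 →
    |polF n d p N σ a z g (N - k) - polF n d p N σ b z g (N - k)| ≤
      (∑ i ∈ Finset.Icc k N, |z i|) *
        (∑ i ∈ Finset.Icc k (N - 1),
          if |z i - chaosEval n d p (σ i) (b i) g| ≤
              coeffDist (idxSet n d p (σ i)) (a i) (b i) * chaosOpNorm n d p (σ i) g
            then (1 : ℝ) else 0) := by
  intro m
  induction m using Nat.strong_induction_on with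
  | _ m IH =>
    intro k hm hk1 hkN
    have hN2 : 2 ≤ N := by omega
    have hkltN : k < N := by omega
    have hznonneg : (0 : ℝ) ≤ ∑ i ∈ Finset.Icc k N, |z i| :=
      Finset.sum_nonneg fun i _ => abs_nonneg _
    have hindnonneg : (0 : ℝ) ≤ ∑ i ∈ Finset.Icc k (N - 1),
        if |z i - chaosEval n d p (σ i) (b i) g| ≤
            coeffDist (idxSet n d p (σ i)) (a i) (b i) * chaosOpNorm n d p (σ i) g
          then (1 : ℝ) else 0 :=
      Finset.sum_nonneg fun i _ => by split_ifs <;> norm_num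
    obtain ⟨m', rfl⟩ : ∃ m', m = m' + 1 := ⟨m - 1, by omega⟩
    have hNk : N - k = m' + 1 := hm
    have hNk' : N - (m' + 1) = k := by omega
    rw [hNk]
    simp only [polF, hNk']
    -- the indicator at position k when branch decisions differ
    have hindk : ∀ (hdiff : |z k - chaosEval n d p (σ k) (b k) g| ≤
          coeffDist (idxSet n d p (σ k)) (a k) (b k) * chaosOpNorm n d p (σ k) g),
        (1 : ℝ) ≤ ∑ i ∈ Finset.Icc k (N - 1),
          if |z i - chaosEval n d p (σ i) (b i) g| ≤
              coeffDist (idxSet n d p (σ i)) (a i) (b i) * chaosOpNorm n d p (σ i) g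
            then (1 : ℝ) else 0 := by
      intro hdiff
      have hk_mem : k ∈ Finset.Icc k (N - 1) := Finset.mem_Icc.mpr ⟨le_rfl, hkN⟩
      calc (1 : ℝ) = if |z k - chaosEval n d p (σ k) (b k) g| ≤
              coeffDist (idxSet n d p (σ k)) (a k) (b k) * chaosOpNorm n d p (σ k) g
            then (1 : ℝ) else 0 := by rw [if_pos hdiff]
        _ ≤ _ := Finset.single_le_sum (f := fun i =>
              if |z i - chaosEval n d p (σ i) (b i) g| ≤
                  coeffDist (idxSet n d p (σ i)) (a i) (b i) * chaosOpNorm n d p (σ i) g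
                then (1 : ℝ) else 0)
              (fun i _ => by split_ifs <;> norm_num) hk_mem
    have hsumsplit : ∑ i ∈ Finset.Icc k N, |z i| = |z k| + ∑ i ∈ Finset.Ioc k N, |z i| := by
      rw [Finset.Icc_eq_cons_Ioc (le_of_lt hkltN), Finset.sum_cons]
    have hpolbound : ∀ c : ℕ → (Fin n → Fin d → ℕ) → ℝ,
        |polF n d p N σ c z g m'| ≤ ∑ i ∈ Finset.Ioc k N, |z i| := by
      intro c
      have h1 := polF_abs_le n d p N σ c z g m'
      have h2 : N - m' = k + 1 := by omega
      rwa [h2, Finset.Icc_add_one_left_eq_Ioc] at h1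
    have habs : |chaosEval n d p (σ k) (a k) g - chaosEval n d p (σ k) (b k) g| ≤
        coeffDist (idxSet n d p (σ k)) (a k) (b k) * chaosOpNorm n d p (σ k) g :=
      chaosEval_sub_le n d p (σ k) (a k) (b k) g
    split_ifs with h1 h2 h2
    · simp only [sub_self, abs_zero]
      exact mul_nonneg hznonneg hindnonneg
    · -- a stops, b continues : z k < C(b k), C(a k) ≤ z k
      push_neg at h2
      have hdiff : |z k - chaosEval n d p (σ k) (b k) g| ≤
          coeffDist (idxSet n d p (σ k)) (a k) (b k) * chaosOpNorm n d p (σ k) g := by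
        rw [abs_of_neg (by linarith), neg_sub]
        calc chaosEval n d p (σ k) (b k) g - z k
            ≤ chaosEval n d p (σ k) (b k) g - chaosEval n d p (σ k) (a k) g := by linarith
          _ ≤ |chaosEval n d p (σ k) (a k) g - chaosEval n d p (σ k) (b k) g| := by
              rw [abs_sub_comm]; exact le_abs_self _
          _ ≤ _ := habs
      calc |z k - polF n d p N σ b z g m'|
          ≤ |z k| + |polF n d p N σ b z g m'| := abs_sub _ _
        _ ≤ |z k| + ∑ i ∈ Finset.Ioc k N, |z i| := by linarith [hpolbound b]
        _ = (∑ i ∈ Finset.Icc k N, |z i|) * 1 := by rw [mul_one, hsumsplit]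
        _ ≤ _ := mul_le_mul_of_nonneg_left (hindk hdiff) hznonneg
    · -- a continues, b stops : C(b k) ≤ z k < C(a k)
      push_neg at h1
      have hdiff : |z k - chaosEval n d p (σ k) (b k) g| ≤
          coeffDist (idxSet n d p (σ k)) (a k) (b k) * chaosOpNorm n d p (σ k) g := by
        rw [abs_of_nonneg (by linarith)]
        calc z k - chaosEval n d p (σ k) (b k) g
            ≤ chaosEval n d p (σ k) (a k) g - chaosEval n d p (σ k) (b k) g := by linarith
          _ ≤ |chaosEval n d p (σ k) (a k) g - chaosEval n d p (σ k) (b k) g| := le_abs_self _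
          _ ≤ _ := habs
      calc |polF n d p N σ a z g m' - z k|
          ≤ |polF n d p N σ a z g m'| + |z k| := abs_sub _ _
        _ ≤ |z k| + ∑ i ∈ Finset.Ioc k N, |z i| := by linarith [hpolbound a]
        _ = (∑ i ∈ Finset.Icc k N, |z i|) * 1 := by rw [mul_one, hsumsplit]
        _ ≤ _ := mul_le_mul_of_nonneg_left (hindk hdiff) hznonneg
    · -- both continue
      rcases eq_or_lt_of_le hkN with hkeq | hklt
      · -- k = N - 1 : continuation is z N on both sides
        have hm0 : m' = 0 := by omega
        subst hm0
        simp only [polF, sub_self, abs_zero]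
        exact mul_nonneg hznonneg hindnonneg
      · -- k < N - 1 : apply the induction hypothesis at k + 1
        have hm'' : N - (k + 1) = m' := by omega
        have hIH := IH m' (Nat.lt_succ_self m') (k + 1) hm'' (by omega) (by omega)
        rw [hm''] at hIH
        refine hIH.trans (mul_le_mul ?_ ?_ ?_ hznonneg)
        · exact Finset.sum_le_sum_of_subset_of_nonneg
            (Finset.Icc_subset_Icc_left (Nat.le_succ k)) (fun i _ _ => abs_nonneg _)
        · exact Finset.sum_le_sum_of_subset_of_nonneg
            (Finset.Icc_subset_Icc_left (Nat.le_succ k))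
            (fun i _ _ => by split_ifs <;> norm_num)
        · exact Finset.sum_nonneg fun i _ => by split_ifs <;> norm_num

/-- Key Lipschitz-type lemma for the policy-iteration vector field: for every
`k = 1,…,N−1` and all coefficient parameters `a, b`,
`|F_k(a,z,g) − F_k(b,z,g)| ≤ (Σ_{i=k}^N |z_i|) ⬝
(Σ_{i=k}^{N-1} 1{|z_i − C_{p,n|σ_i}(b_i; g)| ≤ |a_i − b_i| ⬝ ‖C_{p,n|σ_i}‖(g)})`. -/
theorem polF_lipschitz
    (n d p N : ℕ) (σ : ℕ → ℕ)
    (hσmono : ∀ i j : ℕ, 1 ≤ i → i < j → j ≤ N - 1 → σ i < σ j)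
    (hσn : ∀ i : ℕ, 1 ≤ i → i ≤ N - 1 → σ i ≤ n)
    (k : ℕ) (hk1 : 1 ≤ k) (hkN : k ≤ N - 1)
    (a b : ℕ → (Fin n → Fin d → ℕ) → ℝ) (z : ℕ → ℝ) (g : Fin n → Fin d → ℝ) :
    |polF n d p N σ a z g (N - k) - polF n d p N σ b z g (N - k)| ≤
      (∑ i ∈ Finset.Icc k N, |z i|) *
        (∑ i ∈ Finset.Icc k (N - 1),
          if |z i - chaosEval n d p (σ i) (b i) g| ≤
              coeffDist (idxSet n d p (σ i)) (a i) (b i) * chaosOpNorm n d p (σ i) g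
            then (1 : ℝ) else 0) := by
  exact polF_lipschitz_aux n d p N σ a b z g (N - k) k rfl hk1 hkN

end
end

section
/- With p, n fixed, let Λ = (λ_1,…,λ_{N-1}) be the chaos coefficients of the backward policy iteration, i.e. λ_{k,α} = (1/α!) E[F_{k+1}(Λ, Z, G) H_α^{⊗d}(G)] for α ∈ A_{p,n}^{⊗d,σ_k}, and let Λ̂^M = (λ̂_1^M,…,λ̂_{N-1}^M) be its Monte Carlo approximation computed from M i.i.d. sample paths (Z^{(m)}, G^{(m)}) via λ̂_{k,α}^M = (1/(M α!)) Σ_{ℓ=1}^M F_{k+1}(Λ̂^M, Z^{(ℓ)}, G^{(ℓ)}) H_α^{⊗d}(G^{(ℓ)}) computed backward in k. Assume that for every k = 1,…,N, ℙ(Z_{T_k} ∈ 𝓒_{p,n|σ_k}) = 0, i.e. almost surely Z_{T_k} ≠ C_{p,n|σ_k}(λ_k). Then for every k = 1,…,N−1, λ̂_k^M converges to λ_k almost surely as M → ∞. -/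
open MeasureTheory ProbabilityTheory Polynomial

noncomputable section

variable {Ω : Type*}

/-- Coefficient `λ_α = (1/α!) E[F ⬝ H_α^{⊗d}(G)]` of the Wiener chaos expansion. -/
def chaosCoeff [MeasurableSpace Ω] (P : Measure Ω) {n d : ℕ} (G : Fin n → Ω → Fin d → ℝ)
    (F : Ω → ℝ) (α : Fin n → Fin d → ℕ) : ℝ :=
  ((mfact α : ℝ))⁻¹ * ∫ ω, F ω * hermiteProd α (fun i => G i ω) ∂P

/-- `C_{p,n|k}(F) = Σ_{α ∈ A_{p,n}^{⊗d,k}} λ_α H_α^{⊗d}(G)`; for `k = n` this is the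
truncated chaos expansion `C_{p,n}(F)`. -/
def chaosCE [MeasurableSpace Ω] (P : Measure Ω) {n d : ℕ} (G : Fin n → Ω → Fin d → ℝ)
    (p k : ℕ) (F : Ω → ℝ) (ω : Ω) : ℝ :=
  ∑ α ∈ idxSet n d p k, chaosCoeff P G F α * hermiteProd α (fun i => G i ω)

/-- A `d`-dimensional Brownian motion in law. -/
structure IsBrownian [MeasurableSpace Ω] (P : Measure Ω) (d : ℕ)
    (B : ℝ → Ω → Fin d → ℝ) : Prop where
  meas : ∀ t, Measurable (B t)
  start : ∀ᵐ ω ∂P, B 0 ω = 0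
  cont : ∀ ω, Continuous fun t => B t ω
  indep : ∀ (m : ℕ) (t : ℕ → ℝ), Monotone t → 0 ≤ t 0 →
    iIndepFun
      (fun (q : Fin m × Fin d) => fun ω => B (t (q.1 + 1)) ω q.2 - B (t q.1) ω q.2) P
  gauss : ∀ s u : ℝ, 0 ≤ s → s ≤ u → ∀ j : Fin d,
    P.map (fun ω => B u ω j - B s ω j) = gaussianReal 0 (Real.toNNReal (u - s))

/-- The natural filtration `𝓕_t` of the Brownian motion `B`. -/
def natFilt [MeasurableSpace Ω] {d : ℕ} (B : ℝ → Ω → Fin d → ℝ) (t : ℝ) :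
    MeasurableSpace Ω :=
  ⨆ s : {s : ℝ // 0 ≤ s ∧ s ≤ t}, MeasurableSpace.comap (B s) inferInstance

/-- Normalized increments `G_i = (B_{t_i} - B_{t_{i-1}})/√(t_i - t_{i-1})` of `B`
on the grid `t`. -/
def gridIncr {d : ℕ} (B : ℝ → Ω → Fin d → ℝ) {n : ℕ} (t : Fin (n + 1) → ℝ)
    (i : Fin n) (ω : Ω) (j : Fin d) : ℝ :=
  (B (t i.succ) ω j - B (t i.castSucc) ω j) / Real.sqrt (t i.succ - t i.castSucc)

/-- Backward construction of the Monte-Carlo coefficient estimators: `lamHatAux … M j`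
defines the coefficients for the `j` top indices `k = N-1, …, N-j` (and `0` elsewhere),
via `λ̂_{k,α}^M = (1/(M α!)) Σ_{ℓ<M} F_{k+1}(λ̂^M, z^{(ℓ)}, g^{(ℓ)}) H_α^{⊗d}(g^{(ℓ)})`,
computed backward in `k`. -/
def lamHatAux (n d p N : ℕ) (σ : ℕ → ℕ) (zs : ℕ → ℕ → ℝ)
    (gs : ℕ → Fin n → Fin d → ℝ) (M : ℕ) : ℕ → ℕ → (Fin n → Fin d → ℕ) → ℝ
  | 0 => fun _ _ => 0
  | (j + 1) => fun k α =>
    if k = N - 1 - j then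
      ((M : ℝ) * (mfact α : ℝ))⁻¹ *
        ∑ m ∈ Finset.range M,
          polF n d p N σ (lamHatAux n d p N σ zs gs M j) (zs m) (gs m) (N - (k + 1)) *
            hermiteProd α (gs m)
    else lamHatAux n d p N σ zs gs M j k α

/-- The Monte-Carlo approximation `Λ̂^M` of the chaos coefficients of the backward
policy iteration, computed from the `M` sample paths `(zs, gs)`. -/
def lamHat (n d p N : ℕ) (σ : ℕ → ℕ) (zs : ℕ → ℕ → ℝ)
    (gs : ℕ → Fin n → Fin d → ℝ) (M : ℕ) : ℕ → (Fin n → Fin d → ℕ) → ℝ :=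
  lamHatAux n d p N σ zs gs M (N - 1)

/-! Part A -/

lemma polF_congr_z (n d p N : ℕ) (σ : ℕ → ℕ) (l : ℕ → (Fin n → Fin d → ℕ) → ℝ)
    (z z' : ℕ → ℝ) (g : Fin n → Fin d → ℝ) (h : ∀ i ≤ N, z i = z' i) :
    ∀ m, polF n d p N σ l z g m = polF n d p N σ l z' g m := by
  intro m
  induction m with
  | zero => simp [polF, h N le_rfl]
  | succ m ih =>
      simp only [polF]
      rw [h (N - (m+1)) (by omega), ih]

lemma polF_congr_l (n d p N : ℕ) (σ : ℕ → ℕ) (l l' : ℕ → (Fin n → Fin d → ℕ) → ℝ)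
    (z : ℕ → ℝ) (g : Fin n → Fin d → ℝ) :
    ∀ m, (∀ i, N - m ≤ i → i ≤ N - 1 → l i = l' i) →
      polF n d p N σ l z g m = polF n d p N σ l' z g m := by
  intro m
  induction m with
  | zero => intro _; simp [polF]
  | succ m ih =>
      intro h
      simp only [polF]
      rw [h (N - (m+1)) le_rfl (by omega), ih (fun i h1 h2 => h i (by omega) h2)]

lemma abs_polF_le (n d p N : ℕ) (σ : ℕ → ℕ) (l : ℕ → (Fin n → Fin d → ℕ) → ℝ)
    (z : ℕ → ℝ) (g : Fin n → Fin d → ℝ) (c : ℝ) (hz : ∀ i ≤ N, |z i| ≤ c) :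
    ∀ m, |polF n d p N σ l z g m| ≤ c := by
  intro m
  induction m with
  | zero => simpa [polF] using hz N le_rfl
  | succ m ih =>
      simp only [polF]
      split
      · exact hz _ (by omega)
      · exact ih

lemma polF_eq_of_far (n d p N : ℕ) (σ : ℕ → ℕ) (l Λ : ℕ → (Fin n → Fin d → ℕ) → ℝ)
    (z : ℕ → ℝ) (g : Fin n → Fin d → ℝ) :
    ∀ m, (∀ i, N - m ≤ i → i ≤ N - 1 →
      |chaosEval n d p (σ i) (l i) g - chaosEval n d p (σ i) (Λ i) g| <
        |z i - chaosEval n d p (σ i) (Λ i) g|) →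
      polF n d p N σ l z g m = polF n d p N σ Λ z g m := by
  intro m
  induction m with
  | zero => intro _; simp [polF]
  | succ m ih =>
      intro h
      have hi := h (N - (m+1)) le_rfl (by omega)
      simp only [polF]
      have hcond : (chaosEval n d p (σ (N - (m+1))) (l (N - (m+1))) g ≤ z (N - (m+1))) ↔
          (chaosEval n d p (σ (N - (m+1))) (Λ (N - (m+1))) g ≤ z (N - (m+1))) := by
        constructor <;> intro hc <;> cases abs_cases
          (chaosEval n d p (σ (N - (m+1))) (l (N - (m+1))) g -
            chaosEval n d p (σ (N - (m+1))) (Λ (N - (m+1))) g) <;>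
          cases abs_cases (z (N - (m+1)) - chaosEval n d p (σ (N - (m+1))) (Λ (N - (m+1))) g) <;>
          nlinarith [hi]
      rw [ih (fun i h1 h2 => h i (by omega) h2)]
      by_cases hc : chaosEval n d p (σ (N - (m+1))) (Λ (N - (m+1))) g ≤ z (N - (m+1))
      · rw [if_pos (hcond.2 hc), if_pos hc]
      · rw [if_neg (fun hb => hc (hcond.1 hb)), if_neg hc]

lemma lamHatAux_stable (n d p N : ℕ) (σ : ℕ → ℕ) (zs : ℕ → ℕ → ℝ)
    (gs : ℕ → Fin n → Fin d → ℝ) (M : ℕ) (j : ℕ) :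
    ∀ j' k, j ≤ j' → N - 1 - j < k →
      lamHatAux n d p N σ zs gs M j' k = lamHatAux n d p N σ zs gs M j k := by
  intro j'
  induction j' with
  | zero => intro k hj _; simp [Nat.le_zero.mp hj]
  | succ j' ih =>
      intro k hj hk
      rcases Nat.eq_or_lt_of_le hj with rfl | hlt
      · rfl
      · have hj' : j ≤ j' := by omega
        have hne : k ≠ N - 1 - j' := by omega
        funext α
        have heq : lamHatAux n d p N σ zs gs M (j' + 1) k α =
            lamHatAux n d p N σ zs gs M j' k α := by
          simp only [lamHatAux, if_neg hne]
        rw [heq, ih k hj' hk]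

lemma lamHat_formula (n d p N : ℕ) (σ : ℕ → ℕ) (zs : ℕ → ℕ → ℝ)
    (gs : ℕ → Fin n → Fin d → ℝ) (M : ℕ) (k : ℕ) (hk1 : 1 ≤ k) (hk2 : k ≤ N - 1)
    (α : Fin n → Fin d → ℕ) :
    lamHat n d p N σ zs gs M k α =
      ((M : ℝ) * (mfact α : ℝ))⁻¹ *
        ∑ m ∈ Finset.range M,
          polF n d p N σ (lamHat n d p N σ zs gs M) (zs m) (gs m) (N - (k + 1)) *
            hermiteProd α (gs m) := by
  have hN : 2 ≤ N := by omega
  set j := N - 1 - k with hj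
  have hkeq : k = N - 1 - j := by omega
  have h1 : lamHat n d p N σ zs gs M k α = lamHatAux n d p N σ zs gs M (j+1) k α := by
    rw [lamHat, lamHatAux_stable n d p N σ zs gs M (j+1) (N-1) k (by omega) (by omega)]
  rw [h1]
  show (if k = N - 1 - j then _ else lamHatAux n d p N σ zs gs M j k α) = _
  rw [if_pos hkeq]
  congr 1
  apply Finset.sum_congr rfl
  intro m _
  congr 1
  apply polF_congr_l
  intro i hi1 hi2
  rw [lamHat, lamHatAux_stable n d p N σ zs gs M j (N-1) i (by omega) (by omega)]


/-! Part B : continuity / measurability -/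

def zeOf (N : ℕ) (e : Fin (N + 1) → ℝ) : ℕ → ℝ :=
  fun i => if h : i < N + 1 then e ⟨i, h⟩ else 0

lemma zeOf_le (N : ℕ) (e : Fin (N + 1) → ℝ) (i : ℕ) (hi : i ≤ N) :
    |zeOf N e i| ≤ ⨆ k : Fin (N + 1), |e k| := by
  have h : i < N + 1 := by omega
  simp only [zeOf, dif_pos h]
  exact le_ciSup (f := fun k : Fin (N + 1) => |e k|)
    (Set.Finite.bddAbove (Set.finite_range _)) (⟨i, h⟩ : Fin (N + 1))

lemma zstar_nonneg (N : ℕ) (e : Fin (N + 1) → ℝ) : 0 ≤ ⨆ k : Fin (N + 1), |e k| :=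
  le_trans (abs_nonneg (e 0)) (le_ciSup (f := fun k : Fin (N + 1) => |e k|)
    (Set.Finite.bddAbove (Set.finite_range _)) (0 : Fin (N + 1)))

lemma measurable_zeOf (N : ℕ) (i : ℕ) : Measurable fun e : Fin (N + 1) → ℝ => zeOf N e i := by
  by_cases h : i < N + 1
  · simpa [zeOf, h] using measurable_pi_apply (⟨i, h⟩ : Fin (N + 1))
  · simp only [zeOf, dif_neg h]
    exact measurable_const

lemma measurable_zstar (N : ℕ) : Measurable fun e : Fin (N + 1) → ℝ => ⨆ k : Fin (N + 1), |e k| :=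
  Measurable.iSup fun k => (measurable_pi_apply k).abs

lemma continuous_hermiteFun (m : ℕ) : Continuous (hermiteFun m) :=
  (Polynomial.hermite m).continuous_aeval

lemma continuous_hermiteProd {n d : ℕ} (α : Fin n → Fin d → ℕ) :
    Continuous fun g : Fin n → Fin d → ℝ => hermiteProd α g := by
  unfold hermiteProd
  refine continuous_finset_prod _ fun j _ => continuous_finset_prod _ fun i _ => ?_
  exact (continuous_hermiteFun _).comp ((continuous_apply j).comp (continuous_apply i))

lemma continuous_chaosEval (n d p s : ℕ) (l : (Fin n → Fin d → ℕ) → ℝ) :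
    Continuous fun g : Fin n → Fin d → ℝ => chaosEval n d p s l g := by
  unfold chaosEval
  exact continuous_finset_sum _ fun β _ => (continuous_const.mul (continuous_hermiteProd β))

lemma measurable_polF (n d p N : ℕ) (σ : ℕ → ℕ) (l : ℕ → (Fin n → Fin d → ℕ) → ℝ) (m : ℕ) :
    Measurable fun e : (Fin (N + 1) → ℝ) × (Fin n → Fin d → ℝ) =>
      polF n d p N σ l (zeOf N e.1) e.2 m := by
  induction m with
  | zero =>
      simp only [polF]
      exact (measurable_zeOf N N).comp measurable_fst
  | succ m ih =>
      simp only [polF]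
      refine Measurable.ite ?_ ((measurable_zeOf N _).comp measurable_fst) ih
      exact measurableSet_le
        (((continuous_chaosEval n d p _ _).measurable).comp measurable_snd)
        ((measurable_zeOf N _).comp measurable_fst)

def Kfun (n d p : ℕ) (σ : ℕ → ℕ) (k N : ℕ) (g : Fin n → Fin d → ℝ) : ℝ :=
  ∑ i ∈ Finset.Icc (k + 1) (N - 1), ∑ β ∈ idxSet n d p (σ i), |hermiteProd β g|

lemma Kfun_nonneg (n d p : ℕ) (σ : ℕ → ℕ) (k N : ℕ) (g : Fin n → Fin d → ℝ) :
    0 ≤ Kfun n d p σ k N g :=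
  Finset.sum_nonneg fun i _ => Finset.sum_nonneg fun β _ => abs_nonneg _

lemma continuous_Kfun (n d p : ℕ) (σ : ℕ → ℕ) (k N : ℕ) :
    Continuous fun g : Fin n → Fin d → ℝ => Kfun n d p σ k N g := by
  unfold Kfun
  exact continuous_finset_sum _ fun i _ => continuous_finset_sum _ fun β _ =>
    (continuous_hermiteProd β).abs

lemma chaosEval_sub_le_s12 (n d p s : ℕ) (l l' : (Fin n → Fin d → ℕ) → ℝ)
    (g : Fin n → Fin d → ℝ) (q : ℝ) (h : ∀ β ∈ idxSet n d p s, |l β - l' β| ≤ q) :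
    |chaosEval n d p s l g - chaosEval n d p s l' g| ≤
      q * ∑ β ∈ idxSet n d p s, |hermiteProd β g| := by
  unfold chaosEval
  rw [← Finset.sum_sub_distrib, Finset.mul_sum]
  refine (Finset.abs_sum_le_sum_abs _ _).trans (Finset.sum_le_sum fun β hβ => ?_)
  rw [← sub_mul, abs_mul]
  exact mul_le_mul_of_nonneg_right (h β hβ) (abs_nonneg _)

lemma prod_le_pow_of_le {ι : Type*} (s : Finset ι) (m : ι → ℝ) (M : ℝ)
    (h1 : ∀ l ∈ s, 1 ≤ m l) (h2 : ∀ l ∈ s, m l ≤ M) : ∏ l ∈ s, m l ≤ M ^ s.card := by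
  classical
  induction s using Finset.induction_on with
  | empty => simp
  | @insert a s ha ih =>
      rw [Finset.prod_insert ha, Finset.card_insert_of_notMem ha, pow_succ, mul_comm (M ^ s.card)]
      have hM1 : (1:ℝ) ≤ M := le_trans (h1 a (Finset.mem_insert_self a s)) (h2 a (Finset.mem_insert_self a s))
      refine mul_le_mul (h2 a (Finset.mem_insert_self a s))
        (ih (fun l hl => h1 l (Finset.mem_insert_of_mem hl))
            (fun l hl => h2 l (Finset.mem_insert_of_mem hl)))
        (Finset.prod_nonneg fun l hl => le_trans zero_le_one (h1 l (Finset.mem_insert_of_mem hl)))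
        (le_trans zero_le_one hM1)

/-- crude AM-GM style bound -/
lemma prod_le_sum_pow {ι : Type*} (s : Finset ι) (c : ι → ℝ) (h : ∀ l ∈ s, 0 ≤ c l) :
    ∏ l ∈ s, c l ≤ 1 + ∑ l ∈ s, (1 + c l ^ s.card) := by
  rcases s.eq_empty_or_nonempty with rfl | hne
  · simp
  have h1 : ∏ l ∈ s, c l ≤ ∏ l ∈ s, max 1 (c l) :=
    Finset.prod_le_prod h fun l _ => le_max_right _ _
  have h2 : ∏ l ∈ s, max 1 (c l) ≤ (s.sup' hne fun l => max 1 (c l)) ^ s.card :=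
    prod_le_pow_of_le s _ _ (fun l _ => le_max_left _ _) fun l hl => Finset.le_sup' (fun l => max 1 (c l)) hl
  obtain ⟨l₀, hl₀, hsup⟩ := Finset.exists_mem_eq_sup' hne fun l => max 1 (c l)
  have h4 : (max 1 (c l₀)) ^ s.card ≤ 1 + c l₀ ^ s.card := by
    rcases le_total (c l₀) 1 with hc | hc
    · rw [max_eq_left hc, one_pow]
      have := pow_nonneg (h l₀ hl₀) s.card
      linarith
    · rw [max_eq_right hc]
      have := pow_nonneg (h l₀ hl₀) s.card
      linarith
  have h5 : 1 + c l₀ ^ s.card ≤ ∑ l ∈ s, (1 + c l ^ s.card) :=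
    Finset.single_le_sum (f := fun l => 1 + c l ^ s.card)
      (fun l hl => add_nonneg zero_le_one (pow_nonneg (h l hl) _)) hl₀
  have h0 : (0:ℝ) ≤ ∑ l ∈ s, (1 + c l ^ s.card) :=
    le_trans (add_nonneg zero_le_one (pow_nonneg (h l₀ hl₀) _)) h5
  calc ∏ l ∈ s, c l ≤ (max 1 (c l₀)) ^ s.card := by rw [← hsup]; exact h1.trans h2
    _ ≤ 1 + c l₀ ^ s.card := h4
    _ ≤ 1 + ∑ l ∈ s, (1 + c l ^ s.card) := by linarith

lemma abs_eval_le (P : Polynomial ℝ) (x : ℝ) :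
    |P.eval x| ≤ (∑ i ∈ Finset.range (P.natDegree + 1), |P.coeff i|) * (1 + x ^ 2) ^ P.natDegree := by
  rw [Polynomial.eval_eq_sum_range, Finset.sum_mul]
  refine (Finset.abs_sum_le_sum_abs _ _).trans (Finset.sum_le_sum fun i hi => ?_)
  rw [abs_mul, abs_pow]
  have hx : |x| ≤ 1 + x ^ 2 := by nlinarith [sq_abs x, sq_nonneg (|x| - 1), abs_nonneg x]
  have h1 : |x| ^ i ≤ (1 + x ^ 2) ^ i := pow_le_pow_left₀ (abs_nonneg x) hx i
  have h2 : (1 + x ^ 2) ^ i ≤ (1 + x ^ 2) ^ P.natDegree :=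
    pow_le_pow_right₀ (by nlinarith [sq_nonneg x]) (by
      have := Finset.mem_range.mp hi; omega)
  exact mul_le_mul_of_nonneg_left (h1.trans h2) (abs_nonneg _)

lemma hermiteFun_growth (a : ℕ) : ∃ C : ℝ, 0 ≤ C ∧ ∃ D : ℕ,
    ∀ x : ℝ, |hermiteFun a x| ≤ C * (1 + x ^ 2) ^ D := by
  set Q : Polynomial ℝ := (Polynomial.hermite a).map (algebraMap ℤ ℝ) with hQ
  refine ⟨∑ i ∈ Finset.range (Q.natDegree + 1), |Q.coeff i|,
    Finset.sum_nonneg fun i _ => abs_nonneg _, Q.natDegree, fun x => ?_⟩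
  have : hermiteFun a x = Q.eval x := by
    rw [hQ, Polynomial.eval_map, hermiteFun, Polynomial.aeval_def]
  rw [this]
  exact abs_eval_le _ x

lemma integrable_growth_gaussian (φ : ℝ → ℝ) (hφ : Continuous φ) (C : ℝ) (D : ℕ)
    (hb : ∀ x, |φ x| ≤ C * (1 + x ^ 2) ^ D) :
    Integrable φ (gaussianReal 0 1) := by
  have hC : 0 ≤ C := by
    have := (abs_nonneg (φ 0)).trans (hb 0)
    simpa using this
  rw [gaussianReal_of_var_ne_zero _ one_ne_zero, gaussianPDF_def,
    integrable_withDensity_iff (measurable_gaussianPDFReal 0 1).ennreal_ofReal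
      (ae_of_all _ fun x => ENNReal.ofReal_lt_top)]
  have hpdf : ∀ x : ℝ, (ENNReal.ofReal (gaussianPDFReal 0 1 x)).toReal
      = (Real.sqrt (2 * Real.pi))⁻¹ * Real.exp (-(2⁻¹ : ℝ) * x ^ 2) := by
    intro x
    rw [ENNReal.toReal_ofReal (gaussianPDFReal_nonneg 0 1 x)]
    unfold gaussianPDFReal
    rw [NNReal.coe_one, mul_one, mul_one]
    congr 1
    ring
  have hint : Integrable (fun x : ℝ => C * ((Real.sqrt (2 * Real.pi))⁻¹ *
      ((1 + x ^ 2) ^ D * Real.exp (-(2⁻¹ : ℝ) * x ^ 2)))) volume := by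
    refine (Integrable.const_mul ?_ _).const_mul _
    have hexp : ∀ x : ℝ, (1 + x ^ 2) ^ D * Real.exp (-(2⁻¹ : ℝ) * x ^ 2) =
        ∑ i ∈ Finset.range (D + 1), (D.choose i : ℝ) *
          (x ^ (2 * i) * Real.exp (-(2⁻¹ : ℝ) * x ^ 2)) := by
      intro x
      rw [add_comm (1:ℝ) (x ^ 2), add_pow, Finset.sum_mul]
      refine Finset.sum_congr rfl fun i _ => ?_
      rw [← pow_mul]
      ring
    simp only [hexp]
    refine integrable_finset_sum _ fun i _ => Integrable.const_mul ?_ _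
    have h3 := integrable_rpow_mul_exp_neg_mul_sq (by norm_num : (0:ℝ) < 2⁻¹)
      (s := ((2 * i : ℕ) : ℝ)) (lt_of_lt_of_le (by norm_num) (Nat.cast_nonneg _))
    have h2 : (fun x : ℝ => x ^ (((2 * i : ℕ)) : ℝ) * Real.exp (-(2⁻¹:ℝ) * x ^ 2))
        = fun x : ℝ => x ^ (2 * i) * Real.exp (-(2⁻¹:ℝ) * x ^ 2) := by
      funext x; rw [Real.rpow_natCast]
    rw [← h2]
    exact h3
  refine Integrable.mono' hint ?_ (ae_of_all _ fun x => ?_)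
  · exact (hφ.aestronglyMeasurable).mul
      ((measurable_gaussianPDFReal 0 1).ennreal_ofReal.ennreal_toReal.aestronglyMeasurable)
  · rw [Real.norm_eq_abs, abs_mul, hpdf x]
    have h1 : |φ x| ≤ C * (1 + x ^ 2) ^ D := hb x
    have h2 : |(Real.sqrt (2 * Real.pi))⁻¹ * Real.exp (-(2⁻¹ : ℝ) * x ^ 2)|
        = (Real.sqrt (2 * Real.pi))⁻¹ * Real.exp (-(2⁻¹ : ℝ) * x ^ 2) := by
      refine abs_of_nonneg (mul_nonneg (inv_nonneg.mpr (Real.sqrt_nonneg _)) (Real.exp_nonneg _))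
    rw [h2]
    have h3 : 0 ≤ (Real.sqrt (2 * Real.pi))⁻¹ * Real.exp (-(2⁻¹ : ℝ) * x ^ 2) :=
      mul_nonneg (inv_nonneg.mpr (Real.sqrt_nonneg _)) (Real.exp_nonneg _)
    calc |φ x| * ((Real.sqrt (2 * Real.pi))⁻¹ * Real.exp (-(2⁻¹ : ℝ) * x ^ 2))
        ≤ (C * (1 + x ^ 2) ^ D) * ((Real.sqrt (2 * Real.pi))⁻¹ * Real.exp (-(2⁻¹ : ℝ) * x ^ 2)) :=
          mul_le_mul_of_nonneg_right h1 h3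
      _ = C * ((Real.sqrt (2 * Real.pi))⁻¹ * ((1 + x ^ 2) ^ D * Real.exp (-(2⁻¹ : ℝ) * x ^ 2))) := by
          ring


/-! Part C : probabilistic glue -/

lemma mfact_pos {n d : ℕ} (α : Fin n → Fin d → ℕ) : 0 < mfact α :=
  Finset.prod_pos fun j _ => Finset.prod_pos fun i _ => Nat.factorial_pos _

/-- SLLN wrapper for an iid sequence with common law `ν`. -/
lemma slln_of_iid {Ω : Type*} [MeasurableSpace Ω] (P : Measure Ω) [IsProbabilityMeasure P]
    {E : Type*} [MeasurableSpace E] (W : ℕ → Ω → E) (hW : ∀ m, Measurable (W m))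
    (hiid : iIndepFun W P)
    (ν : Measure E) (hlaw : ∀ m, P.map (W m) = ν)
    (f : E → ℝ) (hfm : Measurable f) (hint : Integrable f ν) :
    ∀ᵐ ω ∂P, Filter.Tendsto
      (fun M : ℕ => (M : ℝ)⁻¹ * ∑ m ∈ Finset.range M, f (W m ω))
      Filter.atTop (nhds (∫ x, f x ∂ν)) := by
  have hX : ∀ m, Integrable (fun ω => f (W m ω)) P := fun m =>
    (integrable_map_measure hfm.aestronglyMeasurable (hW m).aemeasurable).mp
      (by rw [hlaw m]; exact hint)
  have hident : ∀ m, IdentDistrib (fun ω => f (W m ω)) (fun ω => f (W 0 ω)) P P := fun m =>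
    IdentDistrib.comp ⟨(hW m).aemeasurable, (hW 0).aemeasurable,
      (hlaw m).trans (hlaw 0).symm⟩ hfm
  have hindep : Pairwise (Function.onFun (fun g g' => IndepFun g g' P) (fun m ω => f (W m ω))) :=
    fun m m' hmm => IndepFun.comp (hiid.indepFun hmm) hfm hfm
  have h := strong_law_ae (X := fun m ω => f (W m ω)) (hX 0) hindep hident
  have hInt0 : (∫ ω, f (W 0 ω) ∂P) = ∫ x, f x ∂ν := by
    rw [← hlaw 0, integral_map (hW 0).aemeasurable hfm.aestronglyMeasurable]
  filter_upwards [h] with ω hω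
  rw [← hInt0]
  simpa [smul_eq_mul] using hω

/-- L² bound for multivariate Hermite polynomials under a measure with standard
Gaussian marginal second components. -/
lemma memLp_hermiteProd {n d N : ℕ}
    (ν : Measure ((Fin (N + 1) → ℝ) × (Fin n → Fin d → ℝ))) [IsProbabilityMeasure ν]
    (hg : ∀ (i : Fin n) (j : Fin d), ν.map (fun e => e.2 i j) = gaussianReal 0 1)
    (α : Fin n → Fin d → ℕ) :
    MemLp (fun e : (Fin (N + 1) → ℝ) × (Fin n → Fin d → ℝ) => hermiteProd α e.2) 2 ν := by
  have hmeas : AEStronglyMeasurable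
      (fun e : (Fin (N + 1) → ℝ) × (Fin n → Fin d → ℝ) => hermiteProd α e.2) ν :=
    ((continuous_hermiteProd α).comp continuous_snd).aestronglyMeasurable
  rw [memLp_two_iff_integrable_sq hmeas]
  set L := (Finset.univ : Finset (Fin d × Fin n)).card with hL
  -- the integrable dominating function
  have hterm : ∀ (q : Fin d × Fin n), Integrable
      (fun e : (Fin (N + 1) → ℝ) × (Fin n → Fin d → ℝ) =>
        1 + (hermiteFun (α q.2 q.1) (e.2 q.2 q.1) ^ 2) ^ L) ν := by
    intro q
    refine (integrable_const (1:ℝ)).add ?_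
    obtain ⟨C, hC0, D, hCD⟩ := hermiteFun_growth (α q.2 q.1)
    have hψc : Continuous fun x : ℝ => (hermiteFun (α q.2 q.1) x ^ 2) ^ L :=
      (((continuous_hermiteFun _).pow 2).pow L)
    have hψint : Integrable (fun x : ℝ => (hermiteFun (α q.2 q.1) x ^ 2) ^ L)
        (gaussianReal 0 1) := by
      refine integrable_growth_gaussian _ hψc (C ^ (2 * L)) (D * (2 * L)) fun x => ?_
      have h1 : |hermiteFun (α q.2 q.1) x| ^ (2 * L) ≤ (C * (1 + x ^ 2) ^ D) ^ (2 * L) :=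
        pow_le_pow_left₀ (abs_nonneg _) (hCD x) _
      calc |(hermiteFun (α q.2 q.1) x ^ 2) ^ L|
          = |hermiteFun (α q.2 q.1) x| ^ (2 * L) := by
            rw [abs_of_nonneg (pow_nonneg (sq_nonneg _) _), ← pow_mul, pow_abs,
              abs_of_nonneg (by rw [pow_mul]; exact pow_nonneg (sq_nonneg _) _)]
        _ ≤ (C * (1 + x ^ 2) ^ D) ^ (2 * L) := h1
        _ = C ^ (2 * L) * (1 + x ^ 2) ^ (D * (2 * L)) := by
            rw [mul_pow, ← pow_mul]
    have hcoord : Measurable fun e : (Fin (N + 1) → ℝ) × (Fin n → Fin d → ℝ) =>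
        e.2 q.2 q.1 := by
      have h1 : Measurable fun g : Fin n → Fin d → ℝ => g q.2 q.1 :=
        (measurable_pi_apply q.1).comp (measurable_pi_apply q.2)
      exact h1.comp measurable_snd
    have := (integrable_map_measure hψc.measurable.aestronglyMeasurable
      hcoord.aemeasurable).mp (by rw [hg q.2 q.1]; exact hψint)
    exact this
  have hGint : Integrable (fun e : (Fin (N + 1) → ℝ) × (Fin n → Fin d → ℝ) =>
      1 + ∑ q : Fin d × Fin n, (1 + (hermiteFun (α q.2 q.1) (e.2 q.2 q.1) ^ 2) ^ L)) ν :=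
    (integrable_const (1:ℝ)).add (integrable_finset_sum _ fun q _ => hterm q)
  refine Integrable.mono' hGint
    ((((continuous_hermiteProd α).comp continuous_snd).pow 2).aestronglyMeasurable)
    (ae_of_all _ fun e => ?_)
  rw [Real.norm_eq_abs, abs_of_nonneg (sq_nonneg _)]
  have hsq : hermiteProd α e.2 ^ 2 = ∏ q : Fin d × Fin n,
      hermiteFun (α q.2 q.1) (e.2 q.2 q.1) ^ 2 := by
    unfold hermiteProd
    rw [← Finset.prod_pow]
    rw [Fintype.prod_prod_type]
    refine Finset.prod_congr rfl fun j _ => ?_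
    rw [← Finset.prod_pow]
  rw [hsq]
  have := prod_le_sum_pow (Finset.univ : Finset (Fin d × Fin n))
    (fun q => hermiteFun (α q.2 q.1) (e.2 q.2 q.1) ^ 2) (fun q _ => sq_nonneg _)
  simpa [hL] using this


/-! Part D : the flip set and its vanishing integral -/

def flipSet (n d p N : ℕ) (σ : ℕ → ℕ) (Λ : ℕ → (Fin n → Fin d → ℕ) → ℝ) (k : ℕ) (q : ℝ) :
    Set ((Fin (N + 1) → ℝ) × (Fin n → Fin d → ℝ)) :=
  {e | ∃ i ∈ Finset.Icc (k + 1) (N - 1),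
    |zeOf N e.1 i - chaosEval n d p (σ i) (Λ i) e.2| ≤ q * Kfun n d p σ k N e.2}

lemma measurableSet_flipSet (n d p N : ℕ) (σ : ℕ → ℕ) (Λ : ℕ → (Fin n → Fin d → ℕ) → ℝ)
    (k : ℕ) (q : ℝ) : MeasurableSet (flipSet n d p N σ Λ k q) := by
  have : flipSet n d p N σ Λ k q = ⋃ i ∈ (Finset.Icc (k + 1) (N - 1) : Finset ℕ),
      {e : (Fin (N + 1) → ℝ) × (Fin n → Fin d → ℝ) |
        |zeOf N e.1 i - chaosEval n d p (σ i) (Λ i) e.2| ≤ q * Kfun n d p σ k N e.2} := by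
    ext e; simp [flipSet]
  rw [this]
  refine MeasurableSet.biUnion (Finset.Icc (k+1) (N-1)).countable_toSet fun i _ => ?_
  exact measurableSet_le
    ((((measurable_zeOf N i).comp measurable_fst).sub
      (((continuous_chaosEval n d p (σ i) (Λ i)).measurable).comp measurable_snd)).abs)
    ((((continuous_Kfun n d p σ k N).measurable).comp measurable_snd).const_mul q)

def Yfun (n d p N : ℕ) (σ : ℕ → ℕ) (Λ : ℕ → (Fin n → Fin d → ℕ) → ℝ) (k : ℕ)
    (α : Fin n → Fin d → ℕ) (q : ℝ) : ((Fin (N + 1) → ℝ) × (Fin n → Fin d → ℝ)) → ℝ :=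
  (flipSet n d p N σ Λ k q).indicator
    (fun e => 2 * ((⨆ r : Fin (N + 1), |e.1 r|) * |hermiteProd α e.2|))

lemma Yfun_nonneg (n d p N : ℕ) (σ : ℕ → ℕ) (Λ : ℕ → (Fin n → Fin d → ℕ) → ℝ) (k : ℕ)
    (α : Fin n → Fin d → ℕ) (q : ℝ) (e : (Fin (N + 1) → ℝ) × (Fin n → Fin d → ℝ)) :
    0 ≤ Yfun n d p N σ Λ k α q e := by
  refine Set.indicator_nonneg (fun e _ => ?_) e
  exact mul_nonneg zero_le_two (mul_nonneg (zstar_nonneg N e.1) (abs_nonneg _))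

lemma Yfun_le (n d p N : ℕ) (σ : ℕ → ℕ) (Λ : ℕ → (Fin n → Fin d → ℕ) → ℝ) (k : ℕ)
    (α : Fin n → Fin d → ℕ) (q : ℝ) (e : (Fin (N + 1) → ℝ) × (Fin n → Fin d → ℝ)) :
    Yfun n d p N σ Λ k α q e ≤ 2 * ((⨆ r : Fin (N + 1), |e.1 r|) * |hermiteProd α e.2|) := by
  by_cases h : e ∈ flipSet n d p N σ Λ k q
  · rw [Yfun, Set.indicator_of_mem h]
  · rw [Yfun, Set.indicator_of_notMem h]
    exact mul_nonneg zero_le_two (mul_nonneg (zstar_nonneg N e.1) (abs_nonneg _))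

lemma measurable_Yfun (n d p N : ℕ) (σ : ℕ → ℕ) (Λ : ℕ → (Fin n → Fin d → ℕ) → ℝ) (k : ℕ)
    (α : Fin n → Fin d → ℕ) (q : ℝ) : Measurable (Yfun n d p N σ Λ k α q) :=
  Measurable.indicator
    ((((measurable_zstar N).comp measurable_fst).mul
      ((((continuous_hermiteProd α).measurable).comp measurable_snd).abs)).const_mul 2)
    (measurableSet_flipSet n d p N σ Λ k q)

/-- the integral of `Yfun` at scale `(r+1)⁻¹` tends to `0`. -/
lemma tendsto_integral_Yfun (n d p N : ℕ) (σ : ℕ → ℕ) (Λ : ℕ → (Fin n → Fin d → ℕ) → ℝ)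
    (k : ℕ) (α : Fin n → Fin d → ℕ)
    (ν : Measure ((Fin (N + 1) → ℝ) × (Fin n → Fin d → ℝ))) [IsProbabilityMeasure ν]
    (hnull : ∀ i ∈ Finset.Icc (k + 1) (N - 1),
      ν {e : (Fin (N + 1) → ℝ) × (Fin n → Fin d → ℝ) |
        zeOf N e.1 i = chaosEval n d p (σ i) (Λ i) e.2} = 0)
    (hbint : Integrable
      (fun e : (Fin (N + 1) → ℝ) × (Fin n → Fin d → ℝ) =>
        2 * ((⨆ r : Fin (N + 1), |e.1 r|) * |hermiteProd α e.2|)) ν) :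
    Filter.Tendsto (fun r : ℕ => ∫ e, Yfun n d p N σ Λ k α (((r : ℝ) + 1)⁻¹) e ∂ν)
      Filter.atTop (nhds 0) := by
  set b : ((Fin (N + 1) → ℝ) × (Fin n → Fin d → ℝ)) → ℝ :=
    fun e => 2 * ((⨆ r : Fin (N + 1), |e.1 r|) * |hermiteProd α e.2|) with hb
  set U : Set ((Fin (N + 1) → ℝ) × (Fin n → Fin d → ℝ)) :=
    ⋃ i ∈ (Finset.Icc (k + 1) (N - 1) : Finset ℕ),
      {e : (Fin (N + 1) → ℝ) × (Fin n → Fin d → ℝ) |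
        zeOf N e.1 i = chaosEval n d p (σ i) (Λ i) e.2} with hU
  have hUnull : ν U = 0 :=
    (measure_biUnion_null_iff (Finset.Icc (k+1) (N-1)).countable_toSet).2 hnull
  have hblim : ∀ e, Filter.Tendsto
      (fun r : ℕ => Yfun n d p N σ Λ k α (((r : ℝ) + 1)⁻¹) e)
      Filter.atTop (nhds (U.indicator b e)) := by
    intro e
    by_cases hUe : e ∈ U
    · -- e is in some null boundary: the indicator is eventually (in fact always) `b e`
      have hmem : ∀ r : ℕ, e ∈ flipSet n d p N σ Λ k (((r : ℝ) + 1)⁻¹) := by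
        intro r
        simp only [hU, Set.mem_iUnion] at hUe
        obtain ⟨i, hi, he⟩ := hUe
        exact ⟨i, hi, by
          rw [Set.mem_setOf_eq] at he
          rw [he, sub_self, abs_zero]
          exact mul_nonneg (by positivity) (Kfun_nonneg n d p σ k N e.2)⟩
      have : ∀ r : ℕ, Yfun n d p N σ Λ k α (((r : ℝ) + 1)⁻¹) e = b e := fun r =>
        Set.indicator_of_mem (hmem r) _
      rw [Set.indicator_of_mem hUe]
      simp only [this]
      exact tendsto_const_nhds
    · rw [Set.indicator_of_notMem hUe]
      have hpos : ∀ i ∈ Finset.Icc (k + 1) (N - 1),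
          0 < |zeOf N e.1 i - chaosEval n d p (σ i) (Λ i) e.2| := by
        intro i hi
        rw [abs_pos, sub_ne_zero]
        intro hcontra
        exact hUe (by
          simp only [hU, Set.mem_iUnion]
          exact ⟨i, hi, hcontra⟩)
      have hev : ∀ᶠ r : ℕ in Filter.atTop,
          e ∉ flipSet n d p N σ Λ k (((r : ℝ) + 1)⁻¹) := by
        have hK : Filter.Tendsto (fun r : ℕ => ((r : ℝ) + 1)⁻¹ * Kfun n d p σ k N e.2)
            Filter.atTop (nhds 0) := by
          have h0 : Filter.Tendsto (fun r : ℕ => ((r : ℝ) + 1)⁻¹) Filter.atTop (nhds 0) := by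
            simpa [one_div] using tendsto_one_div_add_atTop_nhds_zero_nat (𝕜 := ℝ)
          simpa using h0.mul_const (Kfun n d p σ k N e.2)
        have hall : ∀ᶠ r : ℕ in Filter.atTop, ∀ i ∈ Finset.Icc (k + 1) (N - 1),
            ((r : ℝ) + 1)⁻¹ * Kfun n d p σ k N e.2 <
              |zeOf N e.1 i - chaosEval n d p (σ i) (Λ i) e.2| := by
          rw [Filter.eventually_all_finset]
          intro i hi
          exact hK.eventually_lt_const (hpos i hi)
        filter_upwards [hall] with r hr
        rintro ⟨i, hi, hle⟩
        exact absurd hle (not_le.mpr (hr i hi))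
      refine Filter.Tendsto.congr' ?_ tendsto_const_nhds
      filter_upwards [hev] with r hr
      exact (Set.indicator_of_notMem hr _).symm
  have hlim0 : ∫ e, U.indicator b e ∂ν = 0 := by
    have : (fun e => U.indicator b e) =ᵐ[ν] 0 := by
      have : ∀ᵐ e ∂ν, e ∉ U := by
        rw [MeasureTheory.ae_iff]
        simpa using hUnull
      filter_upwards [this] with e he
      simp [Set.indicator_of_notMem he]
    rw [integral_congr_ae this]
    simp
  rw [← hlim0]
  refine MeasureTheory.tendsto_integral_of_dominated_convergence b
    (fun r => (measurable_Yfun n d p N σ Λ k α _).aestronglyMeasurable) hbint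
    (fun r => ae_of_all _ fun e => ?_) (ae_of_all _ hblim)
  rw [Real.norm_eq_abs, abs_of_nonneg (Yfun_nonneg n d p N σ Λ k α _ e)]
  exact Yfun_le n d p N σ Λ k α _ e


/-- Almost sure convergence of the Monte-Carlo chaos coefficients of the backward
policy iteration: under the non-degeneracy assumption `ℙ(Z_{T_k} = C_{p,n|σ_k}(λ_k)) = 0`
for every `k`, the estimators `λ̂_k^M` converge to the exact coefficients `λ_k`
almost surely as `M → ∞`, for every `k = 1,…,N−1`. -/
theorem lamHat_converges_as
    {Ω : Type*} [MeasurableSpace Ω] (P : Measure Ω) [IsProbabilityMeasure P]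
    {d n : ℕ} (Thor : ℝ) (hT : 0 < Thor) (B : ℝ → Ω → Fin d → ℝ) (hB : IsBrownian P d B)
    (N : ℕ) (hN : 1 ≤ N) (TT : ℕ → ℝ)
    (hTT0 : TT 0 = 0) (hTTN : TT N = Thor) (hTT01 : TT 0 ≤ TT 1)
    (hTTmono : ∀ i j : ℕ, 1 ≤ i → i < j → j ≤ N → TT i < TT j)
    (t : Fin (n + 1) → ℝ) (ht0 : t 0 = 0) (htT : t (Fin.last n) = Thor)
    (hmono : StrictMono t) (p : ℕ) (σ : ℕ → ℕ)
    (hσ : ∀ k : ℕ, 1 ≤ k → k ≤ N → ∃ h : σ k ≤ n, t ⟨σ k, Nat.lt_succ_of_le h⟩ = TT k)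
    (Z : ℕ → Ω → ℝ)
    (hZad : ∀ k ≤ N, Measurable[natFilt B (TT k)] (Z k))
    (hZ2 : MemLp (fun ω => ⨆ k : Fin (N + 1), |Z k ω|) 2 P)
    (Zs : ℕ → ℕ → Ω → ℝ) (Gs : ℕ → Fin n → Ω → Fin d → ℝ)
    (hMeas : ∀ m : ℕ, Measurable (fun ω =>
      (((fun k : Fin (N + 1) => Zs m k ω), fun i j => Gs m i ω j) :
        (Fin (N + 1) → ℝ) × (Fin n → Fin d → ℝ))))
    (hiid : iIndepFun
      (fun (m : ℕ) => fun ω =>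
        (((fun k : Fin (N + 1) => Zs m k ω), fun i j => Gs m i ω j) :
          (Fin (N + 1) → ℝ) × (Fin n → Fin d → ℝ))) P)
    (hlaw : ∀ m : ℕ,
      P.map (fun ω =>
        (((fun k : Fin (N + 1) => Zs m k ω), fun i j => Gs m i ω j) :
          (Fin (N + 1) → ℝ) × (Fin n → Fin d → ℝ))) =
      P.map (fun ω =>
        (((fun k : Fin (N + 1) => Z k ω), fun i j => gridIncr B t i ω j) :
          (Fin (N + 1) → ℝ) × (Fin n → Fin d → ℝ))))
    (Λ : ℕ → (Fin n → Fin d → ℕ) → ℝ)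
    (hΛ : ∀ k : ℕ, 1 ≤ k → k ≤ N - 1 → ∀ α ∈ idxSet n d p (σ k),
      Λ k α = ((mfact α : ℝ))⁻¹ *
        ∫ ω, polF n d p N σ Λ (fun i => Z i ω) (fun i j => gridIncr B t i ω j)
            (N - (k + 1)) * hermiteProd α (fun i j => gridIncr B t i ω j) ∂P)
    (hND : ∀ k : ℕ, 1 ≤ k → k ≤ N - 1 →
      P {ω | Z k ω = chaosEval n d p (σ k) (Λ k) (fun i j => gridIncr B t i ω j)} = 0) :
    ∀ k : ℕ, 1 ≤ k → k ≤ N - 1 → ∀ α ∈ idxSet n d p (σ k),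
      ∀ᵐ ω ∂P, Filter.Tendsto
        (fun M : ℕ =>
          lamHat n d p N σ (fun m i => Zs m i ω) (fun m i j => Gs m i ω j) M k α)
        Filter.atTop (nhds (Λ k α)) := by
  classical
  -- measurability of building blocks
  have hGridMeas : ∀ (i : Fin n) (j : Fin d), Measurable fun ω => gridIncr B t i ω j := by
    intro i j
    unfold gridIncr
    exact (((measurable_pi_apply j).comp (hB.meas (t i.succ))).sub
      ((measurable_pi_apply j).comp (hB.meas (t i.castSucc)))).div_const _
  have hZmeas : ∀ k, k ≤ N → Measurable (Z k) := by
    intro k hk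
    have hle : natFilt B (TT k) ≤ (inferInstance : MeasurableSpace Ω) := by
      rw [natFilt]
      exact iSup_le fun s => (hB.meas s).comap_le
    exact (hZad k hk).mono hle le_rfl
  set pairZ : Ω → (Fin (N + 1) → ℝ) × (Fin n → Fin d → ℝ) :=
    fun ω => (fun k => Z k ω, fun i j => gridIncr B t i ω j) with hpairZdef
  have hpairZ : Measurable pairZ := by
    refine Measurable.prod ?_ ?_
    · exact measurable_pi_lambda _ fun k => hZmeas k (Nat.lt_succ_iff.mp k.isLt)
    · exact measurable_pi_lambda _ fun i => measurable_pi_lambda _ fun j => hGridMeas i j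
  set ν := P.map pairZ with hν
  have hνprob : IsProbabilityMeasure ν := Measure.isProbabilityMeasure_map hpairZ.aemeasurable
  set W : ℕ → Ω → (Fin (N + 1) → ℝ) × (Fin n → Fin d → ℝ) :=
    fun m ω => (fun k : Fin (N + 1) => Zs m k ω, fun i j => Gs m i ω j) with hWdef
  have hWmeas : ∀ m, Measurable (W m) := hMeas
  have hWlaw : ∀ m, P.map (W m) = ν := fun m => hlaw m
  -- gaussian marginals of ν
  have htnonneg : ∀ i : Fin (n + 1), 0 ≤ t i := fun i => by
    rw [← ht0]; exact hmono.monotone (Fin.zero_le i)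
  have hΔpos : ∀ i : Fin n, 0 < t i.succ - t i.castSucc := fun i =>
    sub_pos.mpr (hmono Fin.castSucc_lt_succ)
  have hmarg : ∀ (i : Fin n) (j : Fin d),
      ν.map (fun e : (Fin (N + 1) → ℝ) × (Fin n → Fin d → ℝ) => e.2 i j) = gaussianReal 0 1 := by
    intro i j
    have hcoord : Measurable fun e : (Fin (N + 1) → ℝ) × (Fin n → Fin d → ℝ) => e.2 i j := by
      have h1 : Measurable fun g : Fin n → Fin d → ℝ => g i j :=
        (measurable_pi_apply j).comp (measurable_pi_apply i)
      exact h1.comp measurable_snd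
    rw [hν, Measure.map_map hcoord hpairZ]
    set Δ := t i.succ - t i.castSucc with hΔ
    have hX : Measurable fun ω => B (t i.succ) ω j - B (t i.castSucc) ω j :=
      ((measurable_pi_apply j).comp (hB.meas (t i.succ))).sub
        ((measurable_pi_apply j).comp (hB.meas (t i.castSucc)))
    have hcomp : ((fun e : (Fin (N + 1) → ℝ) × (Fin n → Fin d → ℝ) => e.2 i j) ∘ pairZ)
        = (fun x : ℝ => (Real.sqrt Δ)⁻¹ * x) ∘
          (fun ω => B (t i.succ) ω j - B (t i.castSucc) ω j) := by
      funext ω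
      simp only [Function.comp_apply, hpairZdef]
      rw [gridIncr, div_eq_inv_mul]
    rw [hcomp, ← Measure.map_map (measurable_const_mul _) hX,
      hB.gauss (t i.castSucc) (t i.succ) (htnonneg _)
        (le_of_lt (hmono Fin.castSucc_lt_succ)) j]
    have hmap := gaussianReal_map_const_mul (μ := 0) (v := Real.toNNReal Δ) ((Real.sqrt Δ)⁻¹)
    have hfun : (fun x : ℝ => (Real.sqrt Δ)⁻¹ * x) = ((Real.sqrt Δ)⁻¹ * ·) := rfl
    rw [hfun, hmap, mul_zero]
    congr 1
    have hΔ0 : 0 < Δ := hΔpos i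
    have hval : ((Real.sqrt Δ)⁻¹) ^ 2 * Δ = 1 := by
      rw [inv_pow, Real.sq_sqrt hΔ0.le]
      exact inv_mul_cancel₀ (ne_of_gt hΔ0)
    apply NNReal.coe_injective
    push_cast
    rw [Real.coe_toNNReal _ hΔ0.le]
    simpa using hval
  -- L² facts
  have hzstar2 : MemLp (fun e : (Fin (N + 1) → ℝ) × (Fin n → Fin d → ℝ) =>
      ⨆ r : Fin (N + 1), |e.1 r|) 2 ν := by
    have hm : Measurable fun e : (Fin (N + 1) → ℝ) × (Fin n → Fin d → ℝ) =>
        ⨆ r : Fin (N + 1), |e.1 r| :=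
      Measurable.iSup fun r => ((measurable_pi_apply r).comp measurable_fst).abs
    rw [hν]
    exact (memLp_map_measure_iff hm.aestronglyMeasurable hpairZ.aemeasurable).mpr hZ2
  have hH2 : ∀ β : Fin n → Fin d → ℕ,
      MemLp (fun e : (Fin (N + 1) → ℝ) × (Fin n → Fin d → ℝ) => hermiteProd β e.2) 2 ν :=
    fun β => memLp_hermiteProd ν hmarg β
  have hprod_int : ∀ β : Fin n → Fin d → ℕ,
      Integrable (fun e : (Fin (N + 1) → ℝ) × (Fin n → Fin d → ℝ) =>
        (⨆ r : Fin (N + 1), |e.1 r|) * |hermiteProd β e.2|) ν := by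
    intro β
    have habs : MemLp (fun e : (Fin (N + 1) → ℝ) × (Fin n → Fin d → ℝ) =>
        |hermiteProd β e.2|) 2 ν := by
      simpa [Real.norm_eq_abs] using (hH2 β).norm
    have := habs.smul (φ := fun e : (Fin (N + 1) → ℝ) × (Fin n → Fin d → ℝ) =>
        ⨆ r : Fin (N + 1), |e.1 r|) hzstar2
      (r := 1) (hpqr := ⟨by rw [inv_one, ← one_div]; exact ENNReal.add_halves 1⟩)
    rw [memLp_one_iff_integrable] at this
    exact this
  have hbint : ∀ β : Fin n → Fin d → ℕ,
      Integrable (fun e : (Fin (N + 1) → ℝ) × (Fin n → Fin d → ℝ) =>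
        2 * ((⨆ r : Fin (N + 1), |e.1 r|) * |hermiteProd β e.2|)) ν :=
    fun β => (hprod_int β).const_mul 2
  -- null boundary sets under ν
  have hnullset : ∀ i, 1 ≤ i → i ≤ N - 1 →
      ν {e : (Fin (N + 1) → ℝ) × (Fin n → Fin d → ℝ) |
        zeOf N e.1 i = chaosEval n d p (σ i) (Λ i) e.2} = 0 := by
    intro i h1 h2
    have hms : MeasurableSet {e : (Fin (N + 1) → ℝ) × (Fin n → Fin d → ℝ) |
        zeOf N e.1 i = chaosEval n d p (σ i) (Λ i) e.2} :=
      measurableSet_eq_fun ((measurable_zeOf N i).comp measurable_fst)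
        ((continuous_chaosEval n d p (σ i) (Λ i)).measurable.comp measurable_snd)
    rw [hν, Measure.map_apply hpairZ hms]
    have hset : pairZ ⁻¹' {e | zeOf N e.1 i = chaosEval n d p (σ i) (Λ i) e.2}
        = {ω | Z i ω = chaosEval n d p (σ i) (Λ i) (fun a b => gridIncr B t a ω b)} := by
      ext ω
      simp only [Set.mem_preimage, Set.mem_setOf_eq, hpairZdef]
      have hz : zeOf N (fun k : Fin (N + 1) => Z k ω) i = Z i ω := by
        rw [zeOf, dif_pos (by omega : i < N + 1)]
      rw [hz]
    rw [hset]
    exact hND i h1 h2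
  ----------------------------------------------------------------
  -- main downward induction
  have key : ∀ c : ℕ, ∀ k : ℕ, 1 ≤ k → k ≤ N - 1 → N - 1 - k < c →
      ∀ α ∈ idxSet n d p (σ k), ∀ᵐ ω ∂P, Filter.Tendsto
        (fun M : ℕ =>
          lamHat n d p N σ (fun m i => Zs m i ω) (fun m i j => Gs m i ω j) M k α)
        Filter.atTop (nhds (Λ k α)) := by
    intro c
    induction c with
    | zero => intro k _ _ h; omega
    | succ c ih =>
      intro k hk1 hk2 _ α hα
      set S : Finset ℕ := Finset.Icc (k + 1) (N - 1) with hS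
      set fLam : ((Fin (N + 1) → ℝ) × (Fin n → Fin d → ℝ)) → ℝ :=
        fun e => polF n d p N σ Λ (zeOf N e.1) e.2 (N - (k + 1)) * hermiteProd α e.2 with hfLam
      have hfLam_meas : Measurable fLam :=
        (measurable_polF n d p N σ Λ _).mul
          (((continuous_hermiteProd α).measurable).comp measurable_snd)
      have hfLam_int : Integrable fLam ν := by
        refine Integrable.mono' (hprod_int α) hfLam_meas.aestronglyMeasurable
          (ae_of_all _ fun e => ?_)
        rw [Real.norm_eq_abs, hfLam, abs_mul]
        refine mul_le_mul_of_nonneg_right ?_ (abs_nonneg _)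
        exact abs_polF_le n d p N σ Λ (zeOf N e.1) e.2 _ (fun i hi => zeOf_le N e.1 i hi) _
      -- value of the limit integral
      have hcval : (mfact α : ℝ) ≠ 0 := Nat.cast_ne_zero.mpr (mfact_pos α).ne'
      have hIΛ : ∫ e, fLam e ∂ν = (mfact α : ℝ) * Λ k α := by
        rw [hν, integral_map hpairZ.aemeasurable hfLam_meas.aestronglyMeasurable]
        have heq : (fun ω => fLam (pairZ ω)) =
            fun ω => polF n d p N σ Λ (fun i => Z i ω) (fun i j => gridIncr B t i ω j)
              (N - (k + 1)) * hermiteProd α (fun i j => gridIncr B t i ω j) := by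
          funext ω
          simp only [hfLam, hpairZdef]
          congr 1
          exact (polF_congr_z n d p N σ Λ (fun i => Z i ω)
            (zeOf N (fun k : Fin (N + 1) => Z k ω)) _
            (fun i hi => by rw [zeOf, dif_pos (by omega : i < N + 1)]) _).symm
        rw [heq, hΛ k hk1 hk2 α hα, ← mul_assoc, mul_inv_cancel₀ hcval, one_mul]
      -- SLLN for the main term
      have hMain := slln_of_iid P W hWmeas hiid ν hWlaw fLam hfLam_meas hfLam_int
      rw [hIΛ] at hMain
      -- SLLN for the Y-terms
      have hYint : ∀ r : ℕ, Integrable (Yfun n d p N σ Λ k α (((r : ℝ) + 1)⁻¹)) ν := by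
        intro r
        refine Integrable.mono' (hbint α)
          (measurable_Yfun n d p N σ Λ k α _).aestronglyMeasurable (ae_of_all _ fun e => ?_)
        rw [Real.norm_eq_abs, abs_of_nonneg (Yfun_nonneg n d p N σ Λ k α _ e)]
        exact Yfun_le n d p N σ Λ k α _ e
      have hYs : ∀ᵐ ω ∂P, ∀ r : ℕ, Filter.Tendsto
          (fun M : ℕ => (M : ℝ)⁻¹ * ∑ m ∈ Finset.range M,
            Yfun n d p N σ Λ k α (((r : ℝ) + 1)⁻¹) (W m ω))
          Filter.atTop (nhds (∫ e, Yfun n d p N σ Λ k α (((r : ℝ) + 1)⁻¹) e ∂ν)) := by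
        rw [ae_all_iff]
        exact fun r => slln_of_iid P W hWmeas hiid ν hWlaw _
          (measurable_Yfun n d p N σ Λ k α _) (hYint r)
      -- limit of Y-integrals
      have hYlim := tendsto_integral_Yfun n d p N σ Λ k α ν
        (fun i hi => hnullset i (by have := Finset.mem_Icc.mp hi; omega)
          (Finset.mem_Icc.mp hi).2) (hbint α)
      -- induction-hypothesis events
      have hIH : ∀ᵐ ω ∂P, ∀ i : ℕ, ∀ β : Fin n → Fin d → ℕ, i ∈ S →
          β ∈ idxSet n d p (σ i) → Filter.Tendsto
            (fun M : ℕ =>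
              lamHat n d p N σ (fun m i' => Zs m i' ω) (fun m i' j => Gs m i' ω j) M i β)
            Filter.atTop (nhds (Λ i β)) := by
        rw [ae_all_iff]
        intro i
        rw [ae_all_iff]
        intro β
        by_cases hi : i ∈ S
        · by_cases hβ : β ∈ idxSet n d p (σ i)
          · have hiIcc := Finset.mem_Icc.mp hi
            filter_upwards [ih i (by omega) (by omega) (by omega) β hβ] with ω hω _ _
            exact hω
          · exact ae_of_all _ fun ω _ hc => absurd hc hβ
        · exact ae_of_all _ fun ω hc _ => absurd hc hi
      -- assemble
      filter_upwards [hMain, hYs, hIH] with ω hMainω hYω hIHω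
      have hform : ∀ M : ℕ,
          lamHat n d p N σ (fun m i => Zs m i ω) (fun m i j => Gs m i ω j) M k α =
          (mfact α : ℝ)⁻¹ * ((M : ℝ)⁻¹ * ∑ m ∈ Finset.range M,
            polF n d p N σ (lamHat n d p N σ (fun m i => Zs m i ω) (fun m i j => Gs m i ω j) M)
              (fun i => Zs m i ω) (fun i j => Gs m i ω j) (N - (k + 1)) *
              hermiteProd α (fun i j => Gs m i ω j)) := by
        intro M
        rw [lamHat_formula n d p N σ _ _ M k hk1 hk2 α, mul_inv]
        ring
      have hGlim : Filter.Tendsto (fun M : ℕ => (M : ℝ)⁻¹ * ∑ m ∈ Finset.range M,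
          polF n d p N σ (lamHat n d p N σ (fun m i => Zs m i ω) (fun m i j => Gs m i ω j) M)
            (fun i => Zs m i ω) (fun i j => Gs m i ω j) (N - (k + 1)) *
            hermiteProd α (fun i j => Gs m i ω j))
          Filter.atTop (nhds ((mfact α : ℝ) * Λ k α)) := by
        rw [Metric.tendsto_nhds]
        intro ε hε
        obtain ⟨r, hr⟩ := (hYlim.eventually_lt_const (show (0:ℝ) < ε / 4 by positivity)).exists
        have hclose : ∀ᶠ M : ℕ in Filter.atTop, ∀ i ∈ S, ∀ β ∈ idxSet n d p (σ i),
            |lamHat n d p N σ (fun m i' => Zs m i' ω) (fun m i' j => Gs m i' ω j) M i β -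
              Λ i β| ≤ ((r : ℝ) + 1)⁻¹ := by
          rw [Filter.eventually_all_finset]
          intro i hi
          rw [Filter.eventually_all_finset]
          intro β hβ
          have h3 := Metric.tendsto_nhds.mp (hIHω i β hi hβ) (((r : ℝ) + 1)⁻¹) (by positivity)
          filter_upwards [h3] with M hM
          rw [Real.dist_eq] at hM
          exact hM.le
        have hA := Metric.tendsto_nhds.mp hMainω (ε / 4) (by positivity)
        have hBev := Metric.tendsto_nhds.mp (hYω r) (ε / 4) (by positivity)
        filter_upwards [hclose, hA, hBev] with M hcloseM hAM hBM
        rw [Real.dist_eq] at hAM hBM ⊢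
        -- per-sample comparison
        have hdiff : ∀ m : ℕ,
            |polF n d p N σ (lamHat n d p N σ (fun m' i => Zs m' i ω) (fun m' i j => Gs m' i ω j) M)
              (fun i => Zs m i ω) (fun i j => Gs m i ω j) (N - (k + 1)) *
              hermiteProd α (fun i j => Gs m i ω j) - fLam (W m ω)| ≤
            Yfun n d p N σ Λ k α (((r : ℝ) + 1)⁻¹) (W m ω) := by
          intro m
          have hz : ∀ i ≤ N, (fun i => Zs m i ω) i = zeOf N (W m ω).1 i := by
            intro i hi
            rw [hWdef]
            rw [zeOf, dif_pos (by omega : i < N + 1)]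
          have hzz : polF n d p N σ
              (lamHat n d p N σ (fun m' i => Zs m' i ω) (fun m' i j => Gs m' i ω j) M)
              (fun i => Zs m i ω) (fun i j => Gs m i ω j) (N - (k + 1)) =
              polF n d p N σ
              (lamHat n d p N σ (fun m' i => Zs m' i ω) (fun m' i j => Gs m' i ω j) M)
              (zeOf N (W m ω).1) ((W m ω).2) (N - (k + 1)) :=
            polF_congr_z n d p N σ _ _ _ _ hz _
          have hg : hermiteProd α (fun i j => Gs m i ω j) = hermiteProd α ((W m ω).2) := rfl
          rw [hzz, hg, hfLam]
          by_cases hfar : ∀ i, N - (N - (k + 1)) ≤ i → i ≤ N - 1 →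
              |chaosEval n d p (σ i)
                  (lamHat n d p N σ (fun m' i' => Zs m' i' ω) (fun m' i' j => Gs m' i' ω j) M i)
                  ((W m ω).2) -
                chaosEval n d p (σ i) (Λ i) ((W m ω).2)| <
              |zeOf N (W m ω).1 i - chaosEval n d p (σ i) (Λ i) ((W m ω).2)|
          · rw [polF_eq_of_far n d p N σ _ Λ _ _ _ hfar]
            simpa using Yfun_nonneg n d p N σ Λ k α (((r : ℝ) + 1)⁻¹) (W m ω)
          · push_neg at hfar
            obtain ⟨i, hi1, hi2, hle⟩ := hfar
            have hiS : i ∈ S := Finset.mem_Icc.mpr ⟨by omega, hi2⟩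
            have hflip : W m ω ∈ flipSet n d p N σ Λ k (((r : ℝ) + 1)⁻¹) := by
              refine ⟨i, hiS, hle.trans ?_⟩
              refine (chaosEval_sub_le_s12 n d p (σ i) _ _ _ (((r : ℝ) + 1)⁻¹)
                (fun β hβ => hcloseM i hiS β hβ)).trans ?_
              refine mul_le_mul_of_nonneg_left ?_ (by positivity)
              exact Finset.single_le_sum
                (f := fun i' => ∑ β ∈ idxSet n d p (σ i'), |hermiteProd β ((W m ω).2)|)
                (fun i' _ => Finset.sum_nonneg fun β _ => abs_nonneg _) hiS
            rw [Yfun, Set.indicator_of_mem hflip]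
            have h1 := abs_polF_le n d p N σ
              (lamHat n d p N σ (fun m' i' => Zs m' i' ω) (fun m' i' j => Gs m' i' ω j) M)
              (zeOf N (W m ω).1) ((W m ω).2) (⨆ rr : Fin (N + 1), |(W m ω).1 rr|)
              (fun i' hi' => zeOf_le N _ i' hi') (N - (k + 1))
            have h2 := abs_polF_le n d p N σ Λ
              (zeOf N (W m ω).1) ((W m ω).2) (⨆ rr : Fin (N + 1), |(W m ω).1 rr|)
              (fun i' hi' => zeOf_le N _ i' hi') (N - (k + 1))
            rw [← sub_mul, abs_mul]
            calc |polF n d p N σ _ (zeOf N (W m ω).1) ((W m ω).2) (N - (k + 1)) -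
                  polF n d p N σ Λ (zeOf N (W m ω).1) ((W m ω).2) (N - (k + 1))| *
                  |hermiteProd α ((W m ω).2)|
                ≤ ((⨆ rr : Fin (N + 1), |(W m ω).1 rr|) + (⨆ rr : Fin (N + 1), |(W m ω).1 rr|)) *
                  |hermiteProd α ((W m ω).2)| := by
                  refine mul_le_mul_of_nonneg_right ?_ (abs_nonneg _)
                  exact (abs_sub _ _).trans (add_le_add h1 h2)
              _ = 2 * ((⨆ rr : Fin (N + 1), |(W m ω).1 rr|) * |hermiteProd α ((W m ω).2)|) := by
                  ring
        -- sum the per-sample bounds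
        set GM := (M : ℝ)⁻¹ * ∑ m ∈ Finset.range M,
          polF n d p N σ (lamHat n d p N σ (fun m' i => Zs m' i ω) (fun m' i j => Gs m' i ω j) M)
            (fun i => Zs m i ω) (fun i j => Gs m i ω j) (N - (k + 1)) *
            hermiteProd α (fun i j => Gs m i ω j) with hGM
        set AM := (M : ℝ)⁻¹ * ∑ m ∈ Finset.range M, fLam (W m ω) with hAMdef
        set BM := (M : ℝ)⁻¹ * ∑ m ∈ Finset.range M,
          Yfun n d p N σ Λ k α (((r : ℝ) + 1)⁻¹) (W m ω) with hBMdef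
        have hGA : |GM - AM| ≤ BM := by
          rw [hGM, hAMdef, hBMdef, ← mul_sub, ← Finset.sum_sub_distrib, abs_mul,
            abs_of_nonneg (by positivity : (0:ℝ) ≤ (M : ℝ)⁻¹)]
          refine mul_le_mul_of_nonneg_left ?_ (by positivity)
          exact (Finset.abs_sum_le_sum_abs _ _).trans (Finset.sum_le_sum fun m _ => hdiff m)
        have hBMle : BM < ∫ e, Yfun n d p N σ Λ k α (((r : ℝ) + 1)⁻¹) e ∂ν + ε / 4 := by
          have := abs_lt.mp hBM
          linarith [this.2]
        have habs : |GM - (mfact α : ℝ) * Λ k α| ≤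
            |AM - (mfact α : ℝ) * Λ k α| + |GM - AM| := by
          have h : GM - (mfact α : ℝ) * Λ k α = (AM - (mfact α : ℝ) * Λ k α) + (GM - AM) := by
            ring
          rw [h]
          exact abs_add_le _ _
        linarith [hGA, hAM, hr, habs, hBMle]
      have hfun : (fun M : ℕ =>
          lamHat n d p N σ (fun m i => Zs m i ω) (fun m i j => Gs m i ω j) M k α) =
          fun M : ℕ => (mfact α : ℝ)⁻¹ * ((M : ℝ)⁻¹ * ∑ m ∈ Finset.range M,
            polF n d p N σ (lamHat n d p N σ (fun m i => Zs m i ω) (fun m i j => Gs m i ω j) M)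
              (fun i => Zs m i ω) (fun i j => Gs m i ω j) (N - (k + 1)) *
              hermiteProd α (fun i j => Gs m i ω j)) := funext hform
      rw [hfun]
      have hΛeq : Λ k α = (mfact α : ℝ)⁻¹ * ((mfact α : ℝ) * Λ k α) := by
        rw [← mul_assoc, inv_mul_cancel₀ hcval, one_mul]
      rw [hΛeq]
      exact hGlim.const_mul _
  intro k hk1 hk2 α hα
  exact key N k hk1 hk2 (by omega) α hα

end
end
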